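/- Let f : ℝ → ℂ be a bounded continuous function on ℝ that extends continuously to the closed upper half-plane and holomorphically to the open upper half-plane. If f vanishes identically on the real interval (-∞, -1/ε) for some ε > 0, then f vanishes identically on ℝ. -/

import Mathlib

open Complex Set Filter Asymptotics Topology

local notation "conj'" => starRingEnd ℂ

lemma hasDerivAt_conj_comp_conj {g : ℂ → ℂ} {c w : ℂ} (h : HasDerivAt g c (conj' w)) :
    HasDerivAt (fun z => conj' (g (conj' z))) (conj' c) w := by
  rw [hasDerivAt_iff_isLittleO] at h ⊢
  have hc : Tendsto (fun z : ℂ => conj' z) (𝓝 w) (𝓝 (conj' w)) :=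
    Complex.continuous_conj.tendsto w
  have h' := h.comp_tendsto hc
  rw [← Asymptotics.isLittleO_norm_norm] at h' ⊢
  refine h'.congr (fun z => ?_) (fun z => ?_)
  · have : conj' (g (conj' z)) - conj' (g (conj' w)) - (z - w) • conj' c
        = conj' (g (conj' z) - g (conj' w) - (conj' z - conj' w) • c) := by
      simp only [smul_eq_mul, map_sub, map_mul, conj_conj]
    rw [this]
    simp only [Function.comp_apply, RCLike.norm_conj, smul_eq_mul]
  · have : (z : ℂ) - w = conj' (conj' z - conj' w) := by simp
    conv_rhs => rw [this]
    simp only [Function.comp_apply, RCLike.norm_conj]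

/-- Differentiability of `z ↦ conj (g (b - conj z))` for `b` with `conj b = b`. -/
lemma diffAt_reflect {g : ℂ → ℂ} {U : Set ℂ} (hU : IsOpen U)
    (hg : DifferentiableOn ℂ g U) {b : ℂ} (hb : conj' b = b) {z : ℂ}
    (hz : b - conj' z ∈ U) :
    DifferentiableAt ℂ (fun z => conj' (g (b - conj' z))) z := by
  have h1 : conj' (b - z) = b - conj' z := by rw [map_sub, hb]
  have hd : DifferentiableAt ℂ g (conj' (b - z)) := by
    rw [h1]; exact hg.differentiableAt (hU.mem_nhds hz)
  have h2 := hasDerivAt_conj_comp_conj (w := b - z) hd.hasDerivAt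
  have h3 : HasDerivAt (fun z : ℂ => b - z) (-1) z := by
    simpa using (hasDerivAt_id z).const_sub b
  have h4 := h2.comp z h3
  refine HasDerivAt.differentiableAt (HasDerivAt.congr_of_eventuallyEq h4 ?_)
  filter_upwards with y
  simp only [Function.comp_apply, map_sub, hb]

/-- Differentiability of `z ↦ conj (g (conj z + d))` for `d` with `conj d = -d`. -/
lemma diffAt_reflect' {g : ℂ → ℂ} {U : Set ℂ} (hU : IsOpen U)
    (hg : DifferentiableOn ℂ g U) {d : ℂ} (hd : conj' d = -d) {z : ℂ}
    (hz : conj' z + d ∈ U) :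
    DifferentiableAt ℂ (fun z => conj' (g (conj' z + d))) z := by
  have h1 : conj' (z - d) = conj' z + d := by rw [map_sub, hd, sub_neg_eq_add]
  have hdd : DifferentiableAt ℂ g (conj' (z - d)) := by
    rw [h1]; exact hg.differentiableAt (hU.mem_nhds hz)
  have h2 := hasDerivAt_conj_comp_conj (w := z - d) hdd.hasDerivAt
  have h3 : HasDerivAt (fun z : ℂ => z - d) 1 z := (hasDerivAt_id z).sub_const d
  have h4 := h2.comp z h3
  refine HasDerivAt.differentiableAt (HasDerivAt.congr_of_eventuallyEq h4 ?_)
  filter_upwards with y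
  simp only [Function.comp_apply, map_sub, hd, sub_neg_eq_add]

/-- A bounded function, continuous on the closed upper half plane and
holomorphic on the open upper half plane, that vanishes on the real half line
`(-∞, -1/ε)` vanishes on all of `ℝ`. -/
theorem stmt1 (f : ℂ → ℂ) (ε : ℝ) (hε : 0 < ε)
    (hcont : ContinuousOn f {z : ℂ | 0 ≤ z.im})
    (hholo : DifferentiableOn ℂ f {z : ℂ | 0 < z.im})
    (hbdd : ∃ C : ℝ, ∀ z : ℂ, 0 ≤ z.im → ‖f z‖ ≤ C)
    (hvanish : ∀ x : ℝ, x < -1 / ε → f x = 0) :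
    ∀ x : ℝ, f x = 0 := by
  obtain ⟨C, hC⟩ := hbdd
  have hC0 : 0 ≤ C := le_trans (norm_nonneg (f I)) (hC I (by simp))
  have hUopen : IsOpen {z : ℂ | 0 < z.im} := isOpen_lt continuous_const Complex.continuous_im
  have hUpre : IsPreconnected {z : ℂ | 0 < z.im} := (convex_halfSpace_im_gt 0).isPreconnected
  have hUclU : {z : ℂ | 0 < z.im} ⊆ {z : ℂ | 0 ≤ z.im} := fun z hz => show (0:ℝ) ≤ z.im from le_of_lt hz
  set a : ℝ := -1 / ε with ha
  -- vanishing on the closed ray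
  have hfa : ∀ x : ℝ, x ≤ a → f (x : ℂ) = 0 := by
    intro x hx
    have h1 : Tendsto (fun t : ℝ => f (t : ℂ)) (𝓝[<] x) (𝓝 (f (x : ℂ))) := by
      refine (hcont _ (by simp)).tendsto.comp ?_
      refine tendsto_nhdsWithin_of_tendsto_nhds_of_eventually_within _
        ((Complex.continuous_ofReal.tendsto x).mono_left nhdsWithin_le_nhds) ?_
      exact Eventually.of_forall (fun t => by simp)
    have h2 : Tendsto (fun t : ℝ => f (t : ℂ)) (𝓝[<] x) (𝓝 0) := by
      refine Tendsto.congr' ?_ tendsto_const_nhds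
      filter_upwards [self_mem_nhdsWithin] with t ht
      exact (hvanish t (lt_of_lt_of_le ht hx)).symm
    exact tendsto_nhds_unique h1 h2
  -- the symmetrized function G
  set b : ℂ := ((2 * a : ℝ) : ℂ) with hb
  have hbconj : conj' b = b := Complex.conj_ofReal _
  set G : ℂ → ℂ := fun z => f z * conj' (f (b - conj' z)) with hG
  have himσ : ∀ z : ℂ, (b - conj' z).im = z.im := by
    intro z; simp [hb]
  -- G is differentiable on U and continuous on Ucl
  have hGdiff : DifferentiableOn ℂ G {z : ℂ | 0 < z.im} := by
    intro z hz
    have h1 : DifferentiableAt ℂ (fun z => conj' (f (b - conj' z))) z :=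
      diffAt_reflect hUopen hholo hbconj (by simp only [mem_setOf_eq, himσ]; exact hz)
    exact ((hholo.differentiableAt (hUopen.mem_nhds hz)).mul h1).differentiableWithinAt
  have hσcont : Continuous fun z : ℂ => b - conj' z :=
    continuous_const.sub Complex.continuous_conj
  have hGcont : ContinuousOn G {z : ℂ | 0 ≤ z.im} := by
    refine (hcont.mono le_rfl).mul ?_
    refine Complex.continuous_conj.comp_continuousOn ?_
    refine hcont.comp hσcont.continuousOn ?_
    intro z hz
    simp only [mem_setOf_eq, himσ]; exact hz
  -- G vanishes on the real axis
  have hGreal : ∀ z : ℂ, z.im = 0 → G z = 0 := by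
    intro z hz
    have hzre : z = ((z.re : ℝ) : ℂ) := by
      apply Complex.ext <;> simp [hz]
    rcases le_or_gt z.re a with h | h
    · rw [hG, hzre]
      simp only
      rw [hfa _ h, zero_mul]
    · have : b - conj' z = ((2 * a - z.re : ℝ) : ℂ) := by
        rw [hzre, hb]; push_cast; simp [Complex.conj_ofReal]
      rw [hG]
      simp only
      rw [this, hfa _ (by linarith), map_zero, mul_zero]
  -- the doubly symmetrized function H on the strip
  set G₂ : ℂ → ℂ := fun z => conj' (G (conj' z + I)) with hG2
  set H : ℂ → ℂ := fun z => G z * G₂ z with hH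
  have hIconj : conj' I = -I := Complex.conj_I
  have him2 : ∀ z : ℂ, (conj' z + I).im = 1 - z.im := by
    intro z; simp [sub_eq_neg_add]
  have hSopen : IsOpen (Complex.im ⁻¹' Ioo (0:ℝ) 1) :=
    isOpen_Ioo.preimage Complex.continuous_im
  have hSU : Complex.im ⁻¹' Ioo (0:ℝ) 1 ⊆ {z : ℂ | 0 < z.im} := by
    intro z hz; exact (mem_Ioo.1 hz).1
  have hG2diff : DifferentiableOn ℂ G₂ (Complex.im ⁻¹' Ioo (0:ℝ) 1) := by
    intro z hz
    have hz' : z.im ∈ Ioo (0:ℝ) 1 := hz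
    have hmem : conj' z + I ∈ {z : ℂ | 0 < z.im} := by
      simp only [mem_setOf_eq, him2]
      have := hz'.2; linarith
    exact (diffAt_reflect' hUopen hGdiff hIconj hmem).differentiableWithinAt
  have hTsub : Complex.im ⁻¹' Ioo (0:ℝ) 1 ⊆ Complex.im ⁻¹' Icc (0:ℝ) 1 := by
    intro z hz; exact Ioo_subset_Icc_self hz
  have hHcontT : ContinuousOn H (Complex.im ⁻¹' Icc (0:ℝ) 1) := by
    refine ContinuousOn.mul ?_ ?_
    · exact hGcont.mono (fun z hz => (mem_Icc.1 hz).1)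
    · refine Complex.continuous_conj.comp_continuousOn ?_
      refine hGcont.comp (Complex.continuous_conj.add continuous_const).continuousOn ?_
      intro z hz
      have hz' : z.im ∈ Icc (0:ℝ) 1 := hz
      simp only [mem_setOf_eq, him2]
      have := hz'.2; linarith
  have hHdc : DiffContOnCl ℂ H (Complex.im ⁻¹' Ioo (0:ℝ) 1) := by
    constructor
    · exact (hGdiff.mono hSU).mul hG2diff
    · exact hHcontT.mono
        (closure_minimal hTsub (isClosed_Icc.preimage Complex.continuous_im))
  have hGbdd : ∀ z : ℂ, 0 ≤ z.im → ‖G z‖ ≤ C * C := by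
    intro z hz
    rw [hG]
    simp only [norm_mul, RCLike.norm_conj]
    refine mul_le_mul (hC z hz) ?_ (norm_nonneg _) hC0
    exact hC _ (by rw [himσ]; exact hz)
  have hB : ∃ c < Real.pi / (1 - 0), ∃ B,
      H =O[comap (_root_.abs ∘ Complex.re) atTop ⊓ 𝓟 (Complex.im ⁻¹' Ioo (0:ℝ) 1)]
        fun z => Real.exp (B * Real.exp (c * |z.re|)) := by
    refine ⟨0, by simpa using Real.pi_pos, 0, ?_⟩
    refine Asymptotics.IsBigO.of_bound ((C * C) * (C * C)) ?_
    rw [Filter.eventually_inf_principal]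
    refine Eventually.of_forall (fun z hz => ?_)
    have hz' : z.im ∈ Ioo (0:ℝ) 1 := hz
    simp only [zero_mul, Real.exp_zero, norm_one, mul_one]
    rw [hH]
    simp only [norm_mul]
    have h1 : ‖G z‖ ≤ C * C := hGbdd z (le_of_lt hz'.1)
    have h2 : ‖G₂ z‖ ≤ C * C := by
      rw [hG2]
      simp only
      rw [RCLike.norm_conj]
      exact hGbdd _ (by rw [him2]; linarith [hz'.2])
    exact mul_le_mul h1 h2 (norm_nonneg _) (by positivity)
  have hH0 : EqOn H 0 (Complex.im ⁻¹' Icc (0:ℝ) 1) := by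
    refine PhragmenLindelof.eq_zero_on_horizontal_strip hHdc hB ?_ ?_
    · intro z hz
      rw [hH]; simp only
      rw [hGreal z hz, zero_mul]
    · intro z hz
      rw [hH]; simp only
      rw [hG2]; simp only
      rw [hGreal (conj' z + I) (by rw [him2, hz]; ring), map_zero, mul_zero]
  have hSpre : IsPreconnected (Complex.im ⁻¹' Ioo (0:ℝ) 1) := by
    have he : Complex.im ⁻¹' Ioo (0:ℝ) 1
        = {z : ℂ | 0 < z.im} ∩ {z : ℂ | z.im < 1} := by
      ext z; simp [mem_Ioo, mem_setOf_eq]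
    rw [he]
    exact ((convex_halfSpace_im_gt 0).inter (convex_halfSpace_im_lt 1)).isPreconnected
  set z₀ : ℂ := ((1/2 : ℝ) : ℂ) * I with hz₀
  have hz₀im : z₀.im = 1/2 := by simp [hz₀]
  have hz₀S : z₀ ∈ Complex.im ⁻¹' Ioo (0:ℝ) 1 := by
    simp only [mem_preimage, hz₀im, mem_Ioo]; norm_num
  have hz₀U : z₀ ∈ {z : ℂ | 0 < z.im} := by
    simp only [mem_setOf_eq, hz₀im]; norm_num
  have hGanal : AnalyticOnNhd ℂ G {z : ℂ | 0 < z.im} := hGdiff.analyticOnNhd hUopen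
  have hG2anal : AnalyticOnNhd ℂ G₂ (Complex.im ⁻¹' Ioo (0:ℝ) 1) :=
    hG2diff.analyticOnNhd hSopen
  have hev : ∀ᶠ z in 𝓝[≠] z₀, G z = 0 ∨ G₂ z = 0 := by
    filter_upwards [nhdsWithin_le_nhds (hSopen.mem_nhds hz₀S)] with z hz
    have := hH0 (hTsub hz)
    rw [hH] at this
    simp only [Pi.zero_apply] at this
    exact mul_eq_zero.1 this
  have hGU : EqOn G 0 {z : ℂ | 0 < z.im} := by
    have hfr := hev.frequently
    rw [frequently_or_distrib] at hfr
    rcases hfr with hfr | hfr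
    · exact hGanal.eqOn_zero_of_preconnected_of_frequently_eq_zero hUpre hz₀U hfr
    · have hG2S : EqOn G₂ 0 (Complex.im ⁻¹' Ioo (0:ℝ) 1) :=
        hG2anal.eqOn_zero_of_preconnected_of_frequently_eq_zero hSpre hz₀S hfr
      have hGS : EqOn G 0 (Complex.im ⁻¹' Ioo (0:ℝ) 1) := by
        intro w hw
        have hw' : w.im ∈ Ioo (0:ℝ) 1 := hw
        have hmem : conj' w + I ∈ Complex.im ⁻¹' Ioo (0:ℝ) 1 := by
          simp only [mem_preimage, him2, mem_Ioo]
          constructor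
          · linarith [hw'.2]
          · linarith [hw'.1]
        have h0 := hG2S hmem
        rw [hG2] at h0
        simp only [Pi.zero_apply] at h0
        have harg : conj' (conj' w + I) + I = w := by
          rw [map_add, conj_conj, hIconj]; ring
        rw [harg] at h0
        have := congrArg conj' h0
        simpa using this
      refine hGanal.eqOn_zero_of_preconnected_of_eventuallyEq_zero hUpre hz₀U ?_
      filter_upwards [hSopen.mem_nhds hz₀S] with z hz using hGS hz
  have hrdiff : DifferentiableOn ℂ (fun z => conj' (f (b - conj' z))) {z : ℂ | 0 < z.im} := by
    intro z hz
    exact (diffAt_reflect hUopen hholo hbconj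
      (by simp only [mem_setOf_eq, himσ]; exact hz)).differentiableWithinAt
  have hranal : AnalyticOnNhd ℂ (fun z => conj' (f (b - conj' z))) {z : ℂ | 0 < z.im} :=
    hrdiff.analyticOnNhd hUopen
  have hfanal : AnalyticOnNhd ℂ f {z : ℂ | 0 < z.im} := hholo.analyticOnNhd hUopen
  have hIU : I ∈ {z : ℂ | 0 < z.im} := by simp [mem_setOf_eq]
  have hev2 : ∀ᶠ z in 𝓝[≠] I, f z = 0 ∨ conj' (f (b - conj' z)) = 0 := by
    filter_upwards [nhdsWithin_le_nhds (hUopen.mem_nhds hIU)] with z hz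
    have := hGU hz
    rw [hG] at this
    simp only [Pi.zero_apply] at this
    exact mul_eq_zero.1 this
  have hfU : EqOn f 0 {z : ℂ | 0 < z.im} := by
    have hfr := hev2.frequently
    rw [frequently_or_distrib] at hfr
    rcases hfr with hfr | hfr
    · exact hfanal.eqOn_zero_of_preconnected_of_frequently_eq_zero hUpre hIU hfr
    · have hrU : EqOn (fun z => conj' (f (b - conj' z))) 0 {z : ℂ | 0 < z.im} :=
        hranal.eqOn_zero_of_preconnected_of_frequently_eq_zero hUpre hIU hfr
      intro w hw
      have hw' : b - conj' w ∈ {z : ℂ | 0 < z.im} := by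
        simp only [mem_setOf_eq, himσ]; exact hw
      have h0 := hrU hw'
      simp only [Pi.zero_apply] at h0
      have harg : b - conj' (b - conj' w) = w := by
        rw [map_sub, hbconj, conj_conj]; ring
      rw [harg] at h0
      have := congrArg conj' h0
      simpa using this
  intro x
  have hpath : Tendsto (fun t : ℝ => (x : ℂ) + (t : ℂ) * I) (𝓝[>] 0)
      (𝓝[{z : ℂ | 0 ≤ z.im}] (x : ℂ)) := by
    refine tendsto_nhdsWithin_of_tendsto_nhds_of_eventually_within _ ?_ ?_
    · have hcont' : Continuous fun t : ℝ => (x : ℂ) + (t : ℂ) * I :=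
        continuous_const.add (Complex.continuous_ofReal.mul continuous_const)
      have := hcont'.tendsto 0
      simp only [Complex.ofReal_zero, zero_mul, add_zero] at this
      exact this.mono_left nhdsWithin_le_nhds
    · filter_upwards [self_mem_nhdsWithin] with t ht
      simp only [mem_setOf_eq, Complex.add_im, Complex.ofReal_im, Complex.mul_im,
        Complex.ofReal_re, Complex.I_im, Complex.I_re, mul_zero, mul_one, zero_add, add_zero]
      exact le_of_lt ht
  have h1 : Tendsto (fun t : ℝ => f ((x : ℂ) + (t : ℂ) * I)) (𝓝[>] 0) (𝓝 (f x)) :=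
    ((hcont _ (by simp)).tendsto).comp hpath
  have h2 : Tendsto (fun t : ℝ => f ((x : ℂ) + (t : ℂ) * I)) (𝓝[>] 0) (𝓝 0) := by
    refine Tendsto.congr' ?_ tendsto_const_nhds
    filter_upwards [self_mem_nhdsWithin] with t ht
    refine (hfU ?_).symm
    simp only [mem_setOf_eq, Complex.add_im, Complex.ofReal_im, Complex.mul_im,
      Complex.ofReal_re, Complex.I_im, Complex.I_re, mul_zero, mul_one, zero_add, add_zero]
    exact ht
  exact tendsto_nhds_unique h1 h2
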